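/- (Proposition 3.2, part 2) Assume moreover that D : [0, T] → ℝ is continuously differentiable. Let P^p(t) denote the equilibrium price of Theorem 3.1 computed with storage parameters (α/p, β/p, γ/p), i.e. P^p(t) = ( D(t) − C₀ − (ω·p/(2α))·X^p(t) + c̃₁^p·ω²·cosh(ωt) )/( C₁ + p/(2α) ), where c̃₁^p and X^p are the quantities c̃₁ and X of Theorem 3.1 computed with ω̃ replaced by ω̃^p = ω·√(C₁/(C₁ + p/(2α))) and 1/(2α) replaced by p/(2α). Then the map t ↦ P^p(t) is differentiable and, for every t ∈ [0, T], lim_{p → +∞} (d/dt)P^p(t) = 0. -/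

import Mathlib

open MeasureTheory Filter Set intervalIntegral Topology

lemma my_sinh_le_mul_cosh {x : ℝ} (hx : 0 ≤ x) : Real.sinh x ≤ x * Real.cosh x := by
  have hderiv : ∀ y : ℝ, HasDerivAt (fun z => z * Real.cosh z - Real.sinh z)
      (y * Real.sinh y) y := by
    intro y
    have h := ((hasDerivAt_id y).mul (Real.hasDerivAt_cosh y)).sub (Real.hasDerivAt_sinh y)
    refine h.congr_deriv ?_
    simp only [id_eq, one_mul]
    ring
  have mono : MonotoneOn (fun z : ℝ => z * Real.cosh z - Real.sinh z) (Set.Ici 0) := by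
    apply monotoneOn_of_deriv_nonneg (convex_Ici 0)
    · exact ((continuous_id.mul Real.continuous_cosh).sub Real.continuous_sinh).continuousOn
    · exact fun y _ => ((hderiv y).differentiableAt).differentiableWithinAt
    · intro y hy
      rw [interior_Ici] at hy
      rw [(hderiv y).deriv]
      exact mul_nonneg (le_of_lt hy) (Real.sinh_nonneg_iff.mpr (le_of_lt hy))
  have h0 := mono (Set.self_mem_Ici) hx hx
  simpa using h0

lemma my_integral_sinh_split (f : ℝ → ℝ) (hf : Continuous f) (w t : ℝ) :
    (∫ s in (0:ℝ)..t, f s * Real.sinh (w * (t - s))) =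
      Real.sinh (w * t) * (∫ s in (0:ℝ)..t, f s * Real.cosh (w * s)) -
      Real.cosh (w * t) * ∫ s in (0:ℝ)..t, f s * Real.sinh (w * s) := by
  have h1 : Continuous fun s : ℝ => Real.sinh (w * t) * (f s * Real.cosh (w * s)) := by fun_prop
  have h2 : Continuous fun s : ℝ => Real.cosh (w * t) * (f s * Real.sinh (w * s)) := by fun_prop
  rw [← intervalIntegral.integral_const_mul, ← intervalIntegral.integral_const_mul,
    ← intervalIntegral.integral_sub (h1.intervalIntegrable 0 t) (h2.intervalIntegrable 0 t)]
  apply intervalIntegral.integral_congr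
  intro s _
  simp only
  have hws : w * (t - s) = w * t - w * s := by ring
  rw [hws, Real.sinh_sub]
  ring

lemma my_integral_cosh_split (f : ℝ → ℝ) (hf : Continuous f) (w t : ℝ) :
    (∫ s in (0:ℝ)..t, f s * Real.cosh (w * (t - s))) =
      Real.cosh (w * t) * (∫ s in (0:ℝ)..t, f s * Real.cosh (w * s)) -
      Real.sinh (w * t) * ∫ s in (0:ℝ)..t, f s * Real.sinh (w * s) := by
  have h1 : Continuous fun s : ℝ => Real.cosh (w * t) * (f s * Real.cosh (w * s)) := by fun_prop
  have h2 : Continuous fun s : ℝ => Real.sinh (w * t) * (f s * Real.sinh (w * s)) := by fun_prop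
  rw [← intervalIntegral.integral_const_mul, ← intervalIntegral.integral_const_mul,
    ← intervalIntegral.integral_sub (h1.intervalIntegrable 0 t) (h2.intervalIntegrable 0 t)]
  apply intervalIntegral.integral_congr
  intro s _
  simp only
  have hws : w * (t - s) = w * t - w * s := by ring
  rw [hws, Real.cosh_sub]
  ring

lemma my_hasDerivAt_conv (f : ℝ → ℝ) (hf : Continuous f) (w t : ℝ) :
    HasDerivAt (fun u => ∫ s in (0:ℝ)..u, f s * Real.sinh (w * (u - s)))
      (w * ∫ s in (0:ℝ)..t, f s * Real.cosh (w * (t - s))) t := by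
  have hc : Continuous fun s : ℝ => f s * Real.cosh (w * s) := by fun_prop
  have hs : Continuous fun s : ℝ => f s * Real.sinh (w * s) := by fun_prop
  have hF : HasDerivAt (fun u => ∫ s in (0:ℝ)..u, f s * Real.cosh (w * s))
      (f t * Real.cosh (w * t)) t :=
    intervalIntegral.integral_hasDerivAt_right (hc.intervalIntegrable 0 t)
      (hc.stronglyMeasurableAtFilter _ _) hc.continuousAt
  have hG : HasDerivAt (fun u => ∫ s in (0:ℝ)..u, f s * Real.sinh (w * s))
      (f t * Real.sinh (w * t)) t :=
    intervalIntegral.integral_hasDerivAt_right (hs.intervalIntegrable 0 t)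
      (hs.stronglyMeasurableAtFilter _ _) hs.continuousAt
  have hwu : HasDerivAt (fun u : ℝ => w * u) w t := by
    simpa using (hasDerivAt_id t).const_mul w
  have hsinh : HasDerivAt (fun u : ℝ => Real.sinh (w * u)) (Real.cosh (w * t) * w) t :=
    (Real.hasDerivAt_sinh (w * t)).comp t hwu
  have hcosh : HasDerivAt (fun u : ℝ => Real.cosh (w * u)) (Real.sinh (w * t) * w) t :=
    (Real.hasDerivAt_cosh (w * t)).comp t hwu
  have H := (hsinh.mul hF).sub (hcosh.mul hG)
  have heq : (fun u => ∫ s in (0:ℝ)..u, f s * Real.sinh (w * (u - s))) =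
      fun u => Real.sinh (w * u) * (∫ s in (0:ℝ)..u, f s * Real.cosh (w * s)) -
        Real.cosh (w * u) * ∫ s in (0:ℝ)..u, f s * Real.sinh (w * s) :=
    funext fun u => my_integral_sinh_split f hf w u
  rw [heq]
  refine H.congr_deriv ?_
  rw [my_integral_cosh_split f hf w t]
  ring

lemma my_tendsto_cosh_kernel (f : ℝ → ℝ) (hf : Continuous f) (t W : ℝ) (ht : 0 ≤ t) (hW : 0 ≤ W)
    (w : ℝ → ℝ) (hw0 : Tendsto w atTop (𝓝 0)) (hwb : ∀ᶠ p in atTop, |w p| ≤ W) :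
    Tendsto (fun p => ∫ s in (0:ℝ)..t, f s * Real.cosh (w p * (t - s))) atTop
      (𝓝 (∫ s in (0:ℝ)..t, f s)) := by
  apply intervalIntegral.tendsto_integral_filter_of_dominated_convergence
      (fun x => |f x| * Real.cosh (W * t))
  · exact Eventually.of_forall fun p => Continuous.aestronglyMeasurable (by fun_prop)
  · filter_upwards [hwb] with p hp
    apply Eventually.of_forall
    intro x hx
    rw [Set.uIoc_of_le ht] at hx
    have hu1 : 0 ≤ t - x := by linarith [hx.2]
    have hu2 : t - x ≤ t := by linarith [hx.1]
    have hcb : Real.cosh (w p * (t - x)) ≤ Real.cosh (W * t) := by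
      apply Real.cosh_le_cosh.mpr
      rw [abs_mul, abs_of_nonneg hu1, abs_of_nonneg (mul_nonneg hW ht)]
      exact mul_le_mul hp hu2 hu1 hW
    rw [norm_mul, Real.norm_eq_abs, Real.norm_eq_abs,
      abs_of_nonneg (Real.cosh_pos (x := w p * (t - x))).le]
    exact mul_le_mul_of_nonneg_left hcb (abs_nonneg _)
  · exact Continuous.intervalIntegrable (by fun_prop) 0 t
  · apply Eventually.of_forall
    intro x _
    have h1 : Tendsto (fun p => w p * (t - x)) atTop (𝓝 0) := by
      simpa using hw0.mul_const (t - x)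
    have h2 : Tendsto (fun p => Real.cosh (w p * (t - x))) atTop (𝓝 1) := by
      have := (Real.continuous_cosh.tendsto 0).comp h1
      simpa [Function.comp_def] using this
    simpa using tendsto_const_nhds.mul h2

lemma my_tendsto_sinh_kernel (f : ℝ → ℝ) (hf : Continuous f) (t W : ℝ) (ht : 0 ≤ t) (hW : 0 ≤ W)
    (w : ℝ → ℝ) (hw0 : Tendsto w atTop (𝓝 0))
    (hwb : ∀ᶠ p in atTop, 0 < w p ∧ w p ≤ W) :
    Tendsto (fun p => (w p)⁻¹ * ∫ s in (0:ℝ)..t, f s * Real.sinh (w p * (t - s))) atTop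
      (𝓝 (∫ s in (0:ℝ)..t, f s * (t - s))) := by
  have key : Tendsto (fun p => ∫ s in (0:ℝ)..t, f s * (Real.sinh (w p * (t - s)) / w p)) atTop
      (𝓝 (∫ s in (0:ℝ)..t, f s * (t - s))) := by
    apply intervalIntegral.tendsto_integral_filter_of_dominated_convergence
        (fun x => |f x| * (t * Real.cosh (W * t)))
    · exact Eventually.of_forall fun p => Continuous.aestronglyMeasurable (by fun_prop)
    · filter_upwards [hwb] with p hp
      apply Eventually.of_forall
      intro x hx
      rw [Set.uIoc_of_le ht] at hx
      have hu1 : 0 ≤ t - x := by linarith [hx.2]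
      have hu2 : t - x ≤ t := by linarith [hx.1]
      have hwp := hp.1
      have hsb : Real.sinh (w p * (t - x)) / w p ≤ t * Real.cosh (W * t) := by
        have h1 : Real.sinh (w p * (t - x)) ≤ (w p * (t - x)) * Real.cosh (w p * (t - x)) :=
          my_sinh_le_mul_cosh (mul_nonneg hwp.le hu1)
        have hcb : Real.cosh (w p * (t - x)) ≤ Real.cosh (W * t) := by
          apply Real.cosh_le_cosh.mpr
          rw [abs_mul, abs_of_nonneg hu1, abs_of_nonneg hwp.le,
            abs_of_nonneg (mul_nonneg hW ht)]
          exact mul_le_mul hp.2 hu2 hu1 hW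
        rw [div_le_iff₀ hwp]
        calc Real.sinh (w p * (t - x)) ≤ (w p * (t - x)) * Real.cosh (w p * (t - x)) := h1
          _ ≤ (w p * t) * Real.cosh (W * t) := by
              apply mul_le_mul (by nlinarith) hcb (Real.cosh_pos (x := w p * (t - x))).le (by positivity)
          _ = t * Real.cosh (W * t) * w p := by ring
      have hsnn : 0 ≤ Real.sinh (w p * (t - x)) / w p :=
        div_nonneg (Real.sinh_nonneg_iff.mpr (mul_nonneg hwp.le hu1)) hwp.le
      rw [norm_mul, Real.norm_eq_abs, Real.norm_eq_abs, abs_of_nonneg hsnn]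
      exact mul_le_mul_of_nonneg_left hsb (abs_nonneg _)
    · exact Continuous.intervalIntegrable (by fun_prop) 0 t
    · apply Eventually.of_forall
      intro x _
      set u := t - x with hu
      by_cases hu0 : u = 0
      · simp [hu0]
      · have hslope := hasDerivAt_iff_tendsto_slope.mp (Real.hasDerivAt_sinh 0)
        have harg : Tendsto (fun p => w p * u) atTop (𝓝[≠] (0:ℝ)) := by
          apply tendsto_nhdsWithin_of_tendsto_nhds_of_eventually_within
          · simpa using hw0.mul_const u
          · filter_upwards [hwb] with p hp
            simp [mul_ne_zero (ne_of_gt hp.1) hu0]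
        have hlim : Tendsto (fun p => Real.sinh (w p * u) / w p) atTop (𝓝 u) := by
          have hcomp := (hslope.comp harg).mul_const u
          rw [Real.cosh_zero, one_mul] at hcomp
          apply hcomp.congr'
          filter_upwards [hwb] with p hp
          have hwp : w p ≠ 0 := ne_of_gt hp.1
          simp only [Function.comp_apply, slope_def_field, Real.sinh_zero]
          field_simp
          ring
        exact tendsto_const_nhds.mul hlim
  have heqI : ∀ᶠ p in atTop,
      (w p)⁻¹ * (∫ s in (0:ℝ)..t, f s * Real.sinh (w p * (t - s))) =
        ∫ s in (0:ℝ)..t, f s * (Real.sinh (w p * (t - s)) / w p) := by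
    filter_upwards [hwb] with p hp
    rw [← intervalIntegral.integral_const_mul]
    apply intervalIntegral.integral_congr
    intro s _
    simp only
    ring
  exact key.congr' (heqI.mono fun p hp => hp.symm)

lemma my_integral_cosh_mul (c T : ℝ) (hc : c ≠ 0) :
    ∫ s in (0:ℝ)..T, Real.cosh (c * s) = Real.sinh (c * T) / c := by
  have h : ∀ x ∈ Set.uIcc (0:ℝ) T,
      HasDerivAt (fun s => Real.sinh (c * s) / c) (Real.cosh (c * x)) x := by
    intro x _
    have hwu : HasDerivAt (fun u : ℝ => c * u) c x := by
      simpa using (hasDerivAt_id x).const_mul c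
    have := ((Real.hasDerivAt_sinh (c * x)).comp x hwu).div_const c
    refine this.congr_deriv ?_
    field_simp
  rw [intervalIntegral.integral_eq_sub_of_hasDerivAt h
    (Continuous.intervalIntegrable (by fun_prop) 0 T)]
  simp

lemma my_integral_cosh_mul_linear (c T : ℝ) (hc : c ≠ 0) :
    ∫ s in (0:ℝ)..T, Real.cosh (c * s) * (T - s) = (Real.cosh (c * T) - 1) / c ^ 2 := by
  have h : ∀ x ∈ Set.uIcc (0:ℝ) T,
      HasDerivAt (fun s => (T - s) * Real.sinh (c * s) / c + Real.cosh (c * s) / c ^ 2)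
        (Real.cosh (c * x) * (T - x)) x := by
    intro x _
    have hwu : HasDerivAt (fun u : ℝ => c * u) c x := by
      simpa using (hasDerivAt_id x).const_mul c
    have h1 : HasDerivAt (fun s : ℝ => T - s) (-1) x := by
      exact (hasDerivAt_id' x).const_sub T
    have h2 := (Real.hasDerivAt_sinh (c * x)).comp x hwu
    have h3 := (Real.hasDerivAt_cosh (c * x)).comp x hwu
    have := ((h1.mul h2).div_const c).add (h3.div_const (c ^ 2))
    refine this.congr_deriv ?_
    simp only [Function.comp_apply]
    field_simp
    ring
  rw [intervalIntegral.integral_eq_sub_of_hasDerivAt h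
    (Continuous.intervalIntegrable (by fun_prop) 0 T)]
  field_simp
  simp
set_option maxHeartbeats 2000000 in
/-- (Proposition 3.2, part 2) Assume `D` is continuously differentiable on `[0,T]`. Let
`P^p(t)` denote the equilibrium price of Theorem 3.1 computed with storage parameters
`(α/p, β/p, γ/p)`. Then `t ↦ P^p(t)` is differentiable on `[0,T]` and, for every
`t ∈ [0,T]`, `lim_{p→+∞} (d/dt)P^p(t) = 0`. -/
theorem stmt_18 (α β γ T : ℝ) (hα : 0 < α) (hβ : 0 < β) (hγ : 0 < γ) (hT : 0 < T)
    (ω : ℝ) (hω : ω = Real.sqrt (β / α))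
    (C₀ C₁ : ℝ) (hC₁ : 0 < C₁)
    (D : ℝ → ℝ) (hD : ContDiffOn ℝ 1 D (Set.Icc 0 T))
    (ωhat : ℝ → ℝ) (hωhat : ∀ p, ωhat p = ω * Real.sqrt (C₁ / (C₁ + p / (2 * α))))
    (A B A' B' : ℝ → ℝ)
    (hA : ∀ p, A p = (ω / (ωhat p * (C₁ + p / (2 * α)))) *
      ∫ s in (0:ℝ)..T, (D s - C₀) * Real.sinh (ωhat p * (T - s)))
    (hB : ∀ p, B p = (ω ^ 3 / (ωhat p * (C₁ + p / (2 * α)))) *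
      ∫ s in (0:ℝ)..T, Real.cosh (ω * s) * Real.sinh (ωhat p * (T - s)))
    (hA' : ∀ p, A' p = (ω / (C₁ + p / (2 * α))) *
      ∫ s in (0:ℝ)..T, (D s - C₀) * Real.cosh (ωhat p * (T - s)))
    (hB' : ∀ p, B' p = (ω ^ 3 / (C₁ + p / (2 * α))) *
      ∫ s in (0:ℝ)..T, Real.cosh (ω * s) * Real.cosh (ωhat p * (T - s)))
    (hden : ∀ p > 0,
      2 * (α / p) * ω * ((γ / p) * ω * Real.sinh (ω * T) + (β / p) * Real.cosh (ω * T))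
        - (γ / p) * B' p - (β / p) * B p ≠ 0)
    (c : ℝ → ℝ)
    (hc : ∀ p, c p = ((γ / p) * A' p + (β / p) * A p) /
      (2 * (α / p) * ω * ((γ / p) * ω * Real.sinh (ω * T) + (β / p) * Real.cosh (ω * T))
        - (γ / p) * B' p - (β / p) * B p))
    (X : ℝ → ℝ → ℝ)
    (hX : ∀ p t, X p t = (ω / (ωhat p * (C₁ + p / (2 * α)))) *
        (∫ s in (0:ℝ)..t, (D s - C₀) * Real.sinh (ωhat p * (t - s))) +
      c p * (ω ^ 3 / (ωhat p * (C₁ + p / (2 * α)))) *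
        ∫ s in (0:ℝ)..t, Real.cosh (ω * s) * Real.sinh (ωhat p * (t - s)))
    (P : ℝ → ℝ → ℝ)
    (hP : ∀ p t, P p t =
      (D t - C₀ - (ω * p / (2 * α)) * X p t + c p * ω ^ 2 * Real.cosh (ω * t)) /
        (C₁ + p / (2 * α))) :
    ∀ t ∈ Set.Icc (0 : ℝ) T,
      (∀ p > 0, DifferentiableWithinAt ℝ (fun s => P p s) (Set.Icc 0 T) t) ∧
      Filter.Tendsto (fun p => derivWithin (fun s => P p s) (Set.Icc 0 T) t)
        Filter.atTop (nhds 0) := by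
  -- basic positivity
  have hω0 : 0 < ω := hω ▸ Real.sqrt_pos.mpr (div_pos hβ hα)
  have hα2 : (0:ℝ) < 2 * α := by linarith
  have hKpos : ∀ p, 0 ≤ p → 0 < C₁ + p / (2 * α) := by
    intro p hp
    have : 0 ≤ p / (2 * α) := div_nonneg hp hα2.le
    linarith
  -- extension of D
  have hDc : ContinuousOn D (Set.Icc 0 T) := hD.continuousOn
  set E : ℝ → ℝ := Set.IccExtend hT.le ((Set.Icc (0:ℝ) T).restrict D) with hE
  have hEc : Continuous E := Continuous.Icc_extend' (continuousOn_iff_continuous_restrict.mp hDc)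
  have hED : ∀ x ∈ Set.Icc (0:ℝ) T, E x = D x := fun x hx => Set.IccExtend_of_mem _ _ hx
  set f₁ : ℝ → ℝ := fun x => E x - C₀ with hf₁
  have hf₁c : Continuous f₁ := hEc.sub continuous_const
  set f₂ : ℝ → ℝ := fun x => Real.cosh (ω * x) with hf₂
  have hf₂c : Continuous f₂ := by rw [hf₂]; fun_prop
  clear_value E f₁ f₂
  have hmemsub : ∀ {u s : ℝ}, u ∈ Set.Icc (0:ℝ) T → s ∈ Set.uIcc (0:ℝ) u →
      s ∈ Set.Icc (0:ℝ) T := by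
    intro u s hu hs
    rw [Set.uIcc_of_le hu.1] at hs
    exact ⟨hs.1, hs.2.trans hu.2⟩
  have hTmem : T ∈ Set.Icc (0:ℝ) T := ⟨hT.le, le_rfl⟩
  -- ωhat facts
  have hwpos : ∀ p, 0 < p → 0 < ωhat p := by
    intro p hp
    rw [hωhat p]
    exact mul_pos hω0 (Real.sqrt_pos.mpr (div_pos hC₁ (hKpos p hp.le)))
  have hwle : ∀ p, 0 ≤ p → ωhat p ≤ ω := by
    intro p hp
    rw [hωhat p]
    have h1 : C₁ / (C₁ + p / (2 * α)) ≤ 1 :=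
      (div_le_one (hKpos p hp)).mpr (by have := div_nonneg hp hα2.le; linarith)
    calc ω * Real.sqrt (C₁ / (C₁ + p / (2 * α))) ≤ ω * 1 := by
          apply mul_le_mul_of_nonneg_left _ hω0.le
          simpa using Real.sqrt_le_sqrt h1
      _ = ω := mul_one ω
  -- limits of the basic quantities
  have hKtop : Tendsto (fun p => C₁ + p / (2 * α)) atTop atTop :=
    tendsto_atTop_add_const_left _ C₁ (Tendsto.atTop_div_const hα2 tendsto_id)
  have hC₁K : Tendsto (fun p => C₁ / (C₁ + p / (2 * α))) atTop (𝓝 0) :=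
    tendsto_const_nhds.div_atTop hKtop
  have hw0 : Tendsto ωhat atTop (𝓝 0) := by
    have h1 : Tendsto (fun p => Real.sqrt (C₁ / (C₁ + p / (2 * α)))) atTop (𝓝 0) := by
      have := (Real.continuous_sqrt.tendsto 0).comp hC₁K
      simpa [Function.comp_def] using this
    have h2 := (tendsto_const_nhds (x := ω)).mul h1
    rw [mul_zero] at h2
    exact Tendsto.congr (fun p => (hωhat p).symm) h2
  have hr : Tendsto (fun p => p / (2 * α) / (C₁ + p / (2 * α))) atTop (𝓝 1) := by
    have h1 : Tendsto (fun p => 1 - C₁ / (C₁ + p / (2 * α))) atTop (𝓝 1) := by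
      have := (tendsto_const_nhds (x := (1:ℝ))).sub hC₁K
      simpa using this
    apply Filter.Tendsto.congr' _ h1
    filter_upwards [eventually_ge_atTop 0] with p hp
    have hKp := (hKpos p hp).ne'
    field_simp
    ring
  have hwb : ∀ᶠ p in atTop, 0 < ωhat p ∧ ωhat p ≤ ω := by
    filter_upwards [eventually_gt_atTop 0] with p hp
    exact ⟨hwpos p hp, hwle p hp.le⟩
  have hwabs : ∀ᶠ p in atTop, |ωhat p| ≤ ω := by
    filter_upwards [hwb] with p hp
    rw [abs_of_pos hp.1]; exact hp.2
  -- kernel limits at T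
  have hI1 := my_tendsto_cosh_kernel f₁ hf₁c T ω hT.le hω0.le ωhat hw0 hwabs
  have hJ1 := my_tendsto_sinh_kernel f₁ hf₁c T ω hT.le hω0.le ωhat hw0 hwb
  have hI2 := my_tendsto_cosh_kernel f₂ hf₂c T ω hT.le hω0.le ωhat hw0 hwabs
  have hJ2 := my_tendsto_sinh_kernel f₂ hf₂c T ω hT.le hω0.le ωhat hw0 hwb
  -- rewriting D-integrals into f₁-integrals
  have hintD : ∀ (p u : ℝ), u ∈ Set.Icc (0:ℝ) T →
      (∫ s in (0:ℝ)..u, (D s - C₀) * Real.sinh (ωhat p * (u - s))) =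
        ∫ s in (0:ℝ)..u, f₁ s * Real.sinh (ωhat p * (u - s)) := by
    intro p u hu
    apply intervalIntegral.integral_congr
    intro s hs
    simp only [hf₁, hED s (hmemsub hu hs)]
  have hintD' : ∀ (p u : ℝ), u ∈ Set.Icc (0:ℝ) T →
      (∫ s in (0:ℝ)..u, (D s - C₀) * Real.cosh (ωhat p * (u - s))) =
        ∫ s in (0:ℝ)..u, f₁ s * Real.cosh (ωhat p * (u - s)) := by
    intro p u hu
    apply intervalIntegral.integral_congr
    intro s hs
    simp only [hf₁, hED s (hmemsub hu hs)]
  -- limits of p * A' p etc.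
  have hA'lim : Tendsto (fun p => p * A' p) atTop
      (𝓝 (2 * α * ω * (1 * ∫ s in (0:ℝ)..T, f₁ s))) := by
    apply Filter.Tendsto.congr' _ ((hr.mul hI1).const_mul (2 * α * ω))
    filter_upwards [eventually_gt_atTop 0] with p hp
    rw [hA' p, hintD' p T hTmem]
    have hKp := (hKpos p hp.le).ne'
    field_simp
  have hAlim : Tendsto (fun p => p * A p) atTop
      (𝓝 (2 * α * ω * (1 * ∫ s in (0:ℝ)..T, f₁ s * (T - s)))) := by
    apply Filter.Tendsto.congr' _ ((hr.mul hJ1).const_mul (2 * α * ω))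
    filter_upwards [eventually_gt_atTop 0] with p hp
    rw [hA p, hintD p T hTmem]
    have hKp := (hKpos p hp.le).ne'
    have hwp := (hwpos p hp).ne'
    field_simp
  have hB'lim : Tendsto (fun p => p * B' p) atTop
      (𝓝 (2 * α * ω ^ 3 * (1 * ∫ s in (0:ℝ)..T, f₂ s))) := by
    apply Filter.Tendsto.congr' _ ((hr.mul hI2).const_mul (2 * α * ω ^ 3))
    filter_upwards [eventually_gt_atTop 0] with p hp
    rw [hB' p]
    have hKp := (hKpos p hp.le).ne'
    simp only [hf₂]
    field_simp
  have hBlim : Tendsto (fun p => p * B p) atTop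
      (𝓝 (2 * α * ω ^ 3 * (1 * ∫ s in (0:ℝ)..T, f₂ s * (T - s)))) := by
    apply Filter.Tendsto.congr' _ ((hr.mul hJ2).const_mul (2 * α * ω ^ 3))
    filter_upwards [eventually_gt_atTop 0] with p hp
    rw [hB p]
    have hKp := (hKpos p hp.le).ne'
    have hwp := (hwpos p hp).ne'
    simp only [hf₂]
    field_simp
  -- limit of the denominator
  have hDen'lim : Tendsto (fun p =>
      2 * α * ω * (γ * ω * Real.sinh (ω * T) + β * Real.cosh (ω * T)) -
        γ * (p * B' p) - β * (p * B p)) atTop (𝓝 (2 * α * ω * β)) := by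
    have h := ((tendsto_const_nhds (x := 2 * α * ω * (γ * ω * Real.sinh (ω * T) + β * Real.cosh (ω * T)))).sub (hB'lim.const_mul γ)).sub (hBlim.const_mul β)
    convert h using 2
    have e2 : (∫ s in (0:ℝ)..T, f₂ s) = Real.sinh (ω * T) / ω := by
      simp only [hf₂]
      exact my_integral_cosh_mul ω T hω0.ne'
    have e3 : (∫ s in (0:ℝ)..T, f₂ s * (T - s)) = (Real.cosh (ω * T) - 1) / ω ^ 2 := by
      simp only [hf₂]
      exact my_integral_cosh_mul_linear ω T hω0.ne'
    rw [e2, e3]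
    field_simp
    ring
  have hDenne : (2 : ℝ) * α * ω * β ≠ 0 := by positivity
  -- limit of c
  have hclim : Tendsto c atTop
      (𝓝 ((γ * (2 * α * ω * (1 * ∫ s in (0:ℝ)..T, f₁ s)) +
            β * (2 * α * ω * (1 * ∫ s in (0:ℝ)..T, f₁ s * (T - s)))) / (2 * α * ω * β))) := by
    apply Filter.Tendsto.congr' _
      (((hA'lim.const_mul γ).add (hAlim.const_mul β)).div hDen'lim hDenne)
    filter_upwards [eventually_gt_atTop 0] with p hp
    have hp2 : (p : ℝ) ^ 2 ≠ 0 := pow_ne_zero 2 hp.ne'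
    have e1 : γ * (p * A' p) + β * (p * A p) = p ^ 2 * ((γ / p) * A' p + (β / p) * A p) := by
      field_simp
    have e2 : 2 * α * ω * (γ * ω * Real.sinh (ω * T) + β * Real.cosh (ω * T)) -
        γ * (p * B' p) - β * (p * B p) =
        p ^ 2 * (2 * (α / p) * ω * ((γ / p) * ω * Real.sinh (ω * T) +
          (β / p) * Real.cosh (ω * T)) - (γ / p) * B' p - (β / p) * B p) := by
      field_simp
    simp only [Pi.div_apply]
    rw [e1, e2, mul_div_mul_left _ _ hp2, hc p]
  -- now fix t
  intro t ht
  have huniq : UniqueDiffWithinAt ℝ (Set.Icc (0:ℝ) T) t := (uniqueDiffOn_Icc hT) t ht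
  set d : ℝ := derivWithin D (Set.Icc 0 T) t with hdd
  have hDd : HasDerivWithinAt D d (Set.Icc 0 T) t :=
    ((hD.differentiableOn one_ne_zero) t ht).hasDerivWithinAt
  clear_value d
  -- derivative formula
  have hPd : ∀ p, 0 < p → HasDerivWithinAt (fun s => P p s)
      ((d - ω ^ 2 * (p / (2 * α) / (C₁ + p / (2 * α)) *
          ∫ s in (0:ℝ)..t, f₁ s * Real.cosh (ωhat p * (t - s)))
        - c p * ω ^ 4 * (p / (2 * α) / (C₁ + p / (2 * α)) *
          ∫ s in (0:ℝ)..t, f₂ s * Real.cosh (ωhat p * (t - s)))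
        + c p * ω ^ 3 * Real.sinh (ω * t)) / (C₁ + p / (2 * α)))
      (Set.Icc 0 T) t := by
    intro p hp
    have hKp := hKpos p hp.le
    have hwp := hwpos p hp
    -- X agrees with a nice function on Icc 0 T
    have hXe : ∀ u ∈ Set.Icc (0:ℝ) T, X p u =
        (ω / (ωhat p * (C₁ + p / (2 * α)))) *
          (∫ s in (0:ℝ)..u, f₁ s * Real.sinh (ωhat p * (u - s))) +
        (c p * (ω ^ 3 / (ωhat p * (C₁ + p / (2 * α))))) *
          ∫ s in (0:ℝ)..u, f₂ s * Real.sinh (ωhat p * (u - s)) := by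
      intro u hu
      rw [hX p u, hintD p u hu]
      simp only [hf₂]
    have h1 := (my_hasDerivAt_conv f₁ hf₁c (ωhat p) t).const_mul
      (ω / (ωhat p * (C₁ + p / (2 * α))))
    have h2 := (my_hasDerivAt_conv f₂ hf₂c (ωhat p) t).const_mul
      (c p * (ω ^ 3 / (ωhat p * (C₁ + p / (2 * α)))))
    have hXd : HasDerivWithinAt (fun u => X p u)
        ((ω / (ωhat p * (C₁ + p / (2 * α)))) *
          (ωhat p * ∫ s in (0:ℝ)..t, f₁ s * Real.cosh (ωhat p * (t - s))) +
         (c p * (ω ^ 3 / (ωhat p * (C₁ + p / (2 * α))))) *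
          (ωhat p * ∫ s in (0:ℝ)..t, f₂ s * Real.cosh (ωhat p * (t - s))))
        (Set.Icc 0 T) t := by
      refine HasDerivWithinAt.congr ((h1.add h2).hasDerivWithinAt) hXe (hXe t ht)
    have hwu : HasDerivAt (fun u : ℝ => ω * u) ω t := by
      simpa using (hasDerivAt_id t).const_mul ω
    have hcoshd : HasDerivWithinAt (fun u : ℝ => Real.cosh (ω * u))
        (Real.sinh (ω * t) * ω) (Set.Icc 0 T) t :=
      (((Real.hasDerivAt_cosh (ω * t)).comp t hwu)).hasDerivWithinAt
    have hcomb := (((hDd.sub_const C₀).sub (hXd.const_mul (ω * p / (2 * α)))).add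
      (hcoshd.const_mul (c p * ω ^ 2))).div_const (C₁ + p / (2 * α))
    have hPeq : ∀ u ∈ Set.Icc (0:ℝ) T, P p u =
        (D u - C₀ - ω * p / (2 * α) * X p u + c p * ω ^ 2 * Real.cosh (ω * u)) /
          (C₁ + p / (2 * α)) := by
      intro u _
      rw [hP p u]
    have hgoal := HasDerivWithinAt.congr hcomb hPeq (hPeq t ht)
    refine hgoal.congr_deriv ?_
    generalize (∫ s in (0:ℝ)..t, f₁ s * Real.cosh (ωhat p * (t - s))) = I1
    generalize (∫ s in (0:ℝ)..t, f₂ s * Real.cosh (ωhat p * (t - s))) = I2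
    generalize c p = cp
    field_simp [hwp.ne', hKp.ne']
    ring
  constructor
  · exact fun p hp => (hPd p hp).differentiableWithinAt
  · -- the derivative tends to 0
    have hH1 := my_tendsto_cosh_kernel f₁ hf₁c t ω ht.1 hω0.le ωhat hw0 hwabs
    have hH2 := my_tendsto_cosh_kernel f₂ hf₂c t ω ht.1 hω0.le ωhat hw0 hwabs
    have hnum : Tendsto (fun p =>
        d - ω ^ 2 * (p / (2 * α) / (C₁ + p / (2 * α)) *
            ∫ s in (0:ℝ)..t, f₁ s * Real.cosh (ωhat p * (t - s)))
          - c p * ω ^ 4 * (p / (2 * α) / (C₁ + p / (2 * α)) *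
            ∫ s in (0:ℝ)..t, f₂ s * Real.cosh (ωhat p * (t - s)))
          + c p * ω ^ 3 * Real.sinh (ω * t)) atTop (𝓝
        (d - ω ^ 2 * (1 * ∫ s in (0:ℝ)..t, f₁ s)
          - (γ * (2 * α * ω * (1 * ∫ s in (0:ℝ)..T, f₁ s)) +
              β * (2 * α * ω * (1 * ∫ s in (0:ℝ)..T, f₁ s * (T - s)))) / (2 * α * ω * β) *
              ω ^ 4 * (1 * ∫ s in (0:ℝ)..t, f₂ s)
          + (γ * (2 * α * ω * (1 * ∫ s in (0:ℝ)..T, f₁ s)) +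
              β * (2 * α * ω * (1 * ∫ s in (0:ℝ)..T, f₁ s * (T - s)))) / (2 * α * ω * β) *
              ω ^ 3 * Real.sinh (ω * t))) := by
      exact ((tendsto_const_nhds.sub ((hr.mul hH1).const_mul (ω ^ 2))).sub
        (((hclim.mul_const (ω ^ 4)).mul (hr.mul hH2)))).add
        ((hclim.mul_const (ω ^ 3)).mul_const (Real.sinh (ω * t)))
    have hEp := hnum.div_atTop hKtop
    apply Filter.Tendsto.congr' _ hEp
    filter_upwards [eventually_gt_atTop 0] with p hp
    exact ((hPd p hp).derivWithin huniq).symm
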